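/- Let x₀, x₁,…,xₙ be points in a finite-dimensional real normed space X with x₀ ≠ xᵢ for all i = 1,…,n. Then x₀ ∈ ft(x₁,…,xₙ) if and only if for each i = 1,…,n there exists a norming functional φᵢ for the vector xᵢ − x₀ such that φ₁ + ⋯ + φₙ = 0. -/

import Mathlib

open NormedSpace Filter Topology
set_option maxHeartbeats 1000000

section Aux

variable {X : Type*} [NormedAddCommGroup X] [NormedSpace ℝ X] [FiniteDimensional ℝ X]

lemma finrank_cdual (E : Type*) [NormedAddCommGroup E] [NormedSpace ℝ E]
    [FiniteDimensional ℝ E] : Module.finrank ℝ (StrongDual ℝ E) = Module.finrank ℝ E := by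
  rw [← Subspace.dual_finrank_eq (K := ℝ) (V := E)]
  exact (LinearMap.toContinuousLinearMap (𝕜 := ℝ) (E := E) (F' := ℝ)).finrank_eq.symm

lemma dual_eval_surj (f : StrongDual ℝ (StrongDual ℝ X)) : ∃ v : X, ∀ ψ : StrongDual ℝ X, f ψ = ψ v := by
  have hinj : Function.Injective (inclusionInDoubleDual ℝ X) :=
    (inclusionInDoubleDualLi ℝ (E := X)).injective
  have hsurj : Function.Surjective ((inclusionInDoubleDual ℝ X) : X →ₗ[ℝ] StrongDual ℝ (StrongDual ℝ X)) := by
    refine (LinearMap.injective_iff_surjective_of_finrank_eq_finrank ?_).mp hinj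
    rw [finrank_cdual, finrank_cdual]
  obtain ⟨v, hv⟩ := hsurj f
  exact ⟨v, fun ψ => by rw [← hv]; rfl⟩

end Aux

/-- The Fermat–Torricelli set of a finite tuple of points: the set of points minimizing
the sum of distances to the given points. -/
noncomputable def ftSet {X : Type*} [NormedAddCommGroup X] {n : ℕ} (x : Fin n → X) : Set X :=
  {p | ∀ q : X, ∑ i, ‖p - x i‖ ≤ ∑ i, ‖q - x i‖}

/-- A point x₀ distinct from all the xᵢ is a Fermat–Torricelli point of x₁, …, xₙ
if and only if each vector xᵢ − x₀ admits a norming functional φᵢ (i.e. ‖φᵢ‖ = 1 and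
φᵢ(xᵢ − x₀) = ‖xᵢ − x₀‖) such that φ₁ + ⋯ + φₙ = 0. -/
theorem ft_mem_iff_norming_functionals
    {X : Type*} [NormedAddCommGroup X] [NormedSpace ℝ X] [FiniteDimensional ℝ X]
    {n : ℕ} (x₀ : X) (x : Fin n → X) (hne : ∀ i, x₀ ≠ x i) :
    x₀ ∈ ftSet x ↔
      ∃ φ : Fin n → (X →L[ℝ] ℝ),
        (∀ i, ‖φ i‖ = 1 ∧ φ i (x i - x₀) = ‖x i - x₀‖) ∧ ∑ i, φ i = 0 := by
  constructor
  · -- hard direction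
    intro hmin
    rcases Nat.eq_zero_or_pos n with hn | hn
    · subst hn
      exact ⟨fun i => i.elim0, fun i => i.elim0, by simp⟩
    have : Nontrivial X := ⟨x₀, x ⟨0, hn⟩, hne _⟩
    by_contra hcon
    push_neg at hcon
    set u : Fin n → X := fun i => x₀ - x i with hu
    have hune : ∀ i, u i ≠ 0 := fun i => sub_ne_zero.mpr (hne i)
    set C : Fin n → Set (StrongDual ℝ X) := fun i => {ψ | ‖ψ‖ ≤ 1 ∧ ψ (u i) = ‖u i‖} with hC
    set S : Set (Fin n → StrongDual ℝ X) := Set.univ.pi C with hS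
    set D : Set (StrongDual ℝ X) := (fun Ψ : Fin n → StrongDual ℝ X => ∑ i, Ψ i) '' S with hD
    -- 0 ∉ D
    have hD0 : (0 : StrongDual ℝ X) ∉ D := by
      rintro ⟨Ψ, hΨ, hΨ0⟩
      have hΨ0' : ∑ i, Ψ i = 0 := hΨ0
      refine hcon (fun i => -Ψ i) (fun i => ?_) ?_
      · obtain ⟨hle, hval⟩ := hΨ i (Set.mem_univ i)
        have hpos : (0:ℝ) < ‖u i‖ := norm_pos_iff.mpr (hune i)
        have hge : 1 ≤ ‖Ψ i‖ := by
          have hb := (Ψ i).le_opNorm (u i)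
          rw [hval, norm_norm] at hb
          nlinarith
        constructor
        · rw [norm_neg]; linarith
        · have he : x i - x₀ = -(u i) := by simp only [hu]; abel
          rw [he]
          simp only [ContinuousLinearMap.neg_apply, map_neg, neg_neg, hval, norm_neg]
      · show ∑ i, -Ψ i = 0
        rw [Finset.sum_neg_distrib, hΨ0', neg_zero]
    -- D is convex
    have hDconv : Convex ℝ D := by
      rintro a ⟨Ψa, hΨa, rfl⟩ b ⟨Ψb, hΨb, rfl⟩ s t hs ht hst
      refine ⟨fun i => s • Ψa i + t • Ψb i, fun i _ => ?_, ?_⟩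
      · obtain ⟨ha1, ha2⟩ := hΨa i (Set.mem_univ i)
        obtain ⟨hb1, hb2⟩ := hΨb i (Set.mem_univ i)
        constructor
        · calc ‖s • Ψa i + t • Ψb i‖ ≤ ‖s • Ψa i‖ + ‖t • Ψb i‖ := norm_add_le _ _
            _ = s * ‖Ψa i‖ + t * ‖Ψb i‖ := by
                rw [norm_smul, norm_smul, Real.norm_of_nonneg hs, Real.norm_of_nonneg ht]
            _ ≤ s * 1 + t * 1 := by gcongr
            _ = 1 := by linarith
        · simp only [ContinuousLinearMap.add_apply, ContinuousLinearMap.coe_smul',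
            Pi.smul_apply, smul_eq_mul, ha2, hb2]
          nlinarith [norm_nonneg (u i)]
      · show ∑ i, (s • Ψa i + t • Ψb i) = _
        rw [Finset.sum_add_distrib, ← Finset.smul_sum, ← Finset.smul_sum]
    -- D is compact hence closed
    have hCcpt : ∀ i, IsCompact (C i) := by
      intro i
      refine (isCompact_closedBall (0 : StrongDual ℝ X) 1).of_isClosed_subset ?_ ?_
      · exact (isClosed_le (continuous_norm) continuous_const).inter
          (isClosed_eq ((ContinuousLinearMap.apply ℝ ℝ (u i)).continuous) continuous_const)
      · intro ψ hψ
        simpa [mem_closedBall_zero_iff] using hψ.1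
    have hScpt : IsCompact S := isCompact_univ_pi hCcpt
    have hDcpt : IsCompact D :=
      hScpt.image (continuous_finset_sum _ (fun i _ => continuous_apply i))
    -- separation
    obtain ⟨f, c, hfD, hc0⟩ := geometric_hahn_banach_closed_point hDconv hDcpt.isClosed hD0
    rw [map_zero] at hc0
    obtain ⟨v, hv⟩ := dual_eval_surj f
    -- the sequence of norming functionals
    set t : ℕ → ℝ := fun k => 1 / (k + 1) with ht
    have htpos : ∀ k, 0 < t k := fun k => by positivity
    choose ψ hψ1 hψ2 using fun (k : ℕ) (i : Fin n) => exists_dual_vector' ℝ (u i + t k • v)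
    have hψ2' : ∀ (k : ℕ) (i : Fin n), ψ k i (u i + t k • v) = ‖u i + t k • v‖ := by
      intro k i; exact_mod_cast hψ2 k i
    have hbound : ∀ (k : ℕ) (i : Fin n) (z : X), ψ k i z ≤ ‖z‖ := by
      intro k i z
      have hb := (ψ k i).le_opNorm z
      rw [hψ1, one_mul] at hb
      exact (le_abs_self _).trans (by rw [← Real.norm_eq_abs]; exact hb)
    have hkey : ∀ k, 0 ≤ ∑ i, ψ k i v := by
      intro k
      have h1 := hmin (x₀ + t k • v)
      have hB : ∑ i, ‖x₀ + t k • v - x i‖ ≤ ∑ i, (‖u i‖ + t k * ψ k i v) := by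
        refine Finset.sum_le_sum fun i _ => ?_
        have e : x₀ + t k • v - x i = u i + t k • v := by simp only [hu]; abel
        rw [e, ← hψ2' k i, map_add, map_smul, smul_eq_mul]
        have := hbound k i (u i)
        linarith
      have h0 : ∑ i, ‖x₀ - x i‖ = ∑ i, ‖u i‖ := rfl
      have h2 : ∑ i, ‖u i‖ ≤ ∑ i, ‖u i‖ + t k * ∑ i, ψ k i v := by
        rw [Finset.mul_sum, ← Finset.sum_add_distrib]
        calc ∑ i, ‖u i‖ = ∑ i, ‖x₀ - x i‖ := h0.symm
          _ ≤ ∑ i, ‖x₀ + t k • v - x i‖ := h1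
          _ ≤ _ := hB
      have h3 : 0 ≤ t k * ∑ i, ψ k i v := by linarith
      exact nonneg_of_mul_nonneg_right h3 (htpos k)
    -- cluster point
    have hmem : ∀ k, (fun i => ψ k i) ∈ Set.univ.pi
        (fun _ : Fin n => Metric.closedBall (0 : StrongDual ℝ X) 1) := by
      intro k i _
      simp [mem_closedBall_zero_iff, hψ1 k i]
    obtain ⟨Ψ, hΨmem, g, hg, htend⟩ :=
      (isCompact_univ_pi fun _ => isCompact_closedBall (0 : StrongDual ℝ X) 1).tendsto_subseq hmem
    have heval : ∀ (i : Fin n) (z : X),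
        Tendsto (fun k => ψ (g k) i z) atTop (𝓝 (Ψ i z)) := by
      intro i z
      exact (((ContinuousLinearMap.apply ℝ ℝ z).continuous.comp
        (continuous_apply i)).tendsto Ψ).comp htend
    have ht0 : Tendsto (fun k => t (g k)) atTop (𝓝 0) :=
      (tendsto_one_div_add_atTop_nhds_zero_nat).comp hg.tendsto_atTop
    have hΨC : ∀ i, Ψ i ∈ C i := by
      intro i
      constructor
      · simpa [mem_closedBall_zero_iff] using hΨmem i (Set.mem_univ i)
      · have e1 : Tendsto (fun k => ψ (g k) i (u i)) atTop (𝓝 (Ψ i (u i))) := heval i (u i)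
        have e2 : Tendsto (fun k => ψ (g k) i (u i)) atTop (𝓝 (‖u i‖)) := by
          have expand : ∀ k, ψ (g k) i (u i) = ‖u i + t (g k) • v‖ - t (g k) * ψ (g k) i v := by
            intro k
            have hh := hψ2' (g k) i
            rw [map_add, map_smul, smul_eq_mul] at hh
            linarith
          rw [show (fun k => ψ (g k) i (u i)) = fun k =>
            ‖u i + t (g k) • v‖ - t (g k) * ψ (g k) i v from funext expand]
          have l1 : Tendsto (fun k => ‖u i + t (g k) • v‖) atTop (𝓝 ‖u i‖) := by
            have hc : Continuous fun s : ℝ => ‖u i + s • v‖ :=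
              (continuous_const.add (continuous_id.smul continuous_const)).norm
            simpa [Function.comp_def] using (hc.tendsto 0).comp ht0
          have l2 : Tendsto (fun k => t (g k) * ψ (g k) i v) atTop (𝓝 0) := by
            simpa using ht0.mul (heval i v)
          simpa using l1.sub l2
        exact tendsto_nhds_unique e1 e2
    have hsum_tend : Tendsto (fun k => ∑ i, ψ (g k) i v) atTop (𝓝 (∑ i, Ψ i v)) :=
      tendsto_finset_sum _ (fun i _ => heval i v)
    have hsumge : 0 ≤ ∑ i, Ψ i v := ge_of_tendsto' hsum_tend (fun k => hkey (g k))
    have hin : (∑ i, Ψ i) ∈ D := ⟨Ψ, fun i _ => hΨC i, rfl⟩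
    have hlt := hfD _ hin
    rw [hv] at hlt
    simp only [ContinuousLinearMap.sum_apply] at hlt
    linarith
  · -- easy direction
    rintro ⟨φ, hφ, hsum⟩ q
    have key : ∑ i, ‖x₀ - x i‖ = ∑ i, φ i (x i - q) := by
      have h1 : ∀ i, ‖x₀ - x i‖ = φ i (x i - q) + φ i (q - x₀) := by
        intro i
        have h2 : φ i (x i - q) + φ i (q - x₀) = φ i (x i - x₀) := by
          rw [← map_add]; congr 1; abel
        rw [h2, (hφ i).2, norm_sub_rev]
      rw [Finset.sum_congr rfl fun i _ => h1 i, Finset.sum_add_distrib]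
      have h3 : ∑ i, φ i (q - x₀) = (∑ i, φ i) (q - x₀) := by
        rw [ContinuousLinearMap.sum_apply]
      rw [h3, hsum]
      simp
    rw [key]
    refine Finset.sum_le_sum fun i _ => ?_
    calc φ i (x i - q) ≤ ‖φ i (x i - q)‖ := le_abs_self _
      _ ≤ ‖φ i‖ * ‖x i - q‖ := (φ i).le_opNorm _
      _ = ‖q - x i‖ := by rw [(hφ i).1, one_mul, norm_sub_rev]
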